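/- Let m, n ∈ ℕ with m ≥ 5 odd, and let I := {v ∈ (ZMod m)^n : v_1 + ⋯ + v_n ∈ {1, 3, …, m−2} (mod m)} (a maximum independent set of Z_m^n). Then Σ_{v ∈ V(Z_m^n) \ I} 2^(−|N_{Z_m^n}({v}, I)|) = m^(n−1) · (2 · 2^(−n) + ((m−3)/2) · 2^(−2n)); equivalently, every vertex of class 0 or m−1 has exactly n neighbours in I and every other vertex outside I has exactly 2n neighbours in I. -/

import Mathlib

/-- The discrete torus `Z_m^n`: the graph on `(ZMod m)^n` where two vertices are adjacent
iff they differ by `±1 (mod m)` in exactly one coordinate. -/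
def torus (m n : ℕ) : SimpleGraph (Fin n → ZMod m) :=
  SimpleGraph.fromRel fun u v =>
    ∃ j : Fin n, (u j = v j + 1 ∨ u j = v j - 1) ∧ ∀ i : Fin n, i ≠ j → u i = v i

/-- A set of vertices is independent if its vertices are pairwise non-adjacent. -/
def IsIndep {V : Type*} (G : SimpleGraph V) (s : Set V) : Prop :=
  s.Pairwise fun u v => ¬ G.Adj u v

/-- `N_G(X) := (⋃ x ∈ X, N_G(x)) \ X`. -/
def nbhd {V : Type*} (G : SimpleGraph V) (X : Set V) : Set V :=
  (⋃ x ∈ X, G.neighborSet x) \ X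

/-- `N_G(X, Y) := N_G(X) ∩ Y`. -/
def nbhdIn {V : Type*} (G : SimpleGraph V) (X Y : Set V) : Set V :=
  nbhd G X ∩ Y

/-- `E_m^n(p)`: the vertices of `Z_m^n` whose coordinate sum is `p` modulo `m`. -/
def Eclass (m n : ℕ) (p : ZMod m) : Set (Fin n → ZMod m) :=
  {v | ∑ i, v i = p}

/-- A maximum independent set: an independent set of the largest possible cardinality. -/
def MaxIndep {V : Type*} (G : SimpleGraph V) (s : Set V) : Prop :=
  IsIndep G s ∧ ∀ t : Set V, IsIndep G t → t.ncard ≤ s.ncard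



section
variable {m : ℕ} [NeZero m]

lemma card_fiber (k : ℕ) (s : ZMod m) :
    (Finset.univ.filter fun v : Fin (k+1) → ZMod m => ∑ i, v i = s).card = m ^ k := by
  have this : (Finset.univ.filter fun v : Fin (k+1) → ZMod m => ∑ i, v i = s).card
      = (Finset.univ : Finset (Fin k → ZMod m)).card :=
    Finset.card_nbij' (fun v => Fin.tail v) (fun w => Fin.cons (s - ∑ i, w i) w)
    (fun a _ => Finset.mem_univ _)
    (fun w _ => by
      simp only [Finset.mem_coe, Finset.mem_filter, Finset.mem_univ, true_and]
      rw [Fin.sum_univ_succ]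
      simp [Fin.tail, sub_add_cancel])
    (fun v hv => by
      simp only [Finset.mem_coe, Finset.mem_filter, Finset.mem_univ, true_and] at hv
      have h0 : s - ∑ i : Fin k, v i.succ = v 0 := by
        rw [← hv, Fin.sum_univ_succ]; ring
      show Fin.cons (s - ∑ i : Fin k, Fin.tail v i) (Fin.tail v) = v
      rw [show (∑ i : Fin k, Fin.tail v i) = ∑ i : Fin k, v i.succ from rfl, h0,
        Fin.cons_self_tail])
    (fun w _ => by simp [Fin.tail_cons])
  rw [this, Finset.card_univ]
  simp [ZMod.card]

lemma card_odd_range : ∀ t : ℕ, ((Finset.range (2*t+1)).filter Odd).card = t := by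
  intro t
  induction t with
  | zero => decide
  | succ u ih =>
      have h : Finset.range (2*(u+1)+1) = insert (2*u+2) (insert (2*u+1) (Finset.range (2*u+1))) := by
        ext x; simp only [Finset.mem_range, Finset.mem_insert]; omega
      rw [h, Finset.filter_insert, Finset.filter_insert]
      have h1 : Odd (2*u+1) := ⟨u, by ring⟩
      have h2 : ¬ Odd (2*u+2) := by rw [Nat.odd_iff]; omega
      rw [if_neg h2, if_pos h1,
        Finset.card_insert_of_notMem (by simp only [Finset.mem_filter, Finset.mem_range]; omega), ih]

lemma card_oddclasses (hmo : Odd m) :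
    (Finset.univ.filter fun s : ZMod m => Odd s.val).card = m / 2 := by
  have : (Finset.univ.filter fun s : ZMod m => Odd s.val).card
      = ((Finset.range m).filter Odd).card :=
    Finset.card_nbij' (fun s => s.val) (fun a => (a : ZMod m))
      (fun s hs => by
        simp only [Finset.mem_coe, Finset.mem_filter, Finset.mem_univ, true_and] at hs ⊢
        exact ⟨Finset.mem_range.mpr (ZMod.val_lt s), hs⟩)
      (fun a ha => by
        simp only [Finset.mem_coe, Finset.mem_filter, Finset.mem_range] at ha
        simp only [Finset.mem_coe, Finset.mem_filter, Finset.mem_univ, true_and]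
        show Odd ((a : ZMod m)).val
        rw [ZMod.val_cast_of_lt ha.1]; exact ha.2)
      (fun s _ => by show ((s.val : ℕ) : ZMod m) = s; rw [ZMod.natCast_val, ZMod.cast_id])
      (fun a ha => by
        simp only [Finset.mem_coe, Finset.mem_filter, Finset.mem_range] at ha
        exact ZMod.val_cast_of_lt ha.1)
  rw [this]
  obtain ⟨t, rfl⟩ := hmo
  rw [show 2*t+1 = 2*t+1 from rfl, card_odd_range t]
  omega

end
section
variable {m n : ℕ}

def nf (v : Fin n → ZMod m) (p : Fin n × Bool) : Fin n → ZMod m :=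
  Function.update v p.1 (v p.1 + if p.2 then (1 : ZMod m) else -1)

lemma eps_ne_zero (hm : 5 ≤ m) (b : Bool) : (if b then (1 : ZMod m) else -1) ≠ 0 := by
  haveI : Fact (1 < m) := ⟨by omega⟩
  cases b <;> simp

lemma one_ne_negone (hm : 5 ≤ m) : (1 : ZMod m) ≠ -1 := by
  haveI : Fact (1 < m) := ⟨by omega⟩
  intro h
  have h2 : ((2:ℕ) : ZMod m) = 0 := by push_cast; linear_combination h
  rw [ZMod.natCast_eq_zero_iff] at h2
  have := Nat.le_of_dvd (by norm_num) h2
  omega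

lemma nf_inj (hm : 5 ≤ m) (v : Fin n → ZMod m) : Function.Injective (nf v) := by
  rintro ⟨j, b⟩ ⟨k, c⟩ h
  by_cases hjk : j = k
  · subst hjk
    have h1 := congrFun h j
    simp only [nf, Function.update_self] at h1
    have hbc := add_left_cancel h1
    rcases b with _ | _ <;> rcases c with _ | _
    · rfl
    · exact absurd ((by simpa using hbc : (-1 : ZMod m) = 1)).symm (one_ne_negone hm)
    · exact absurd (by simpa using hbc : (1 : ZMod m) = -1) (one_ne_negone hm)
    · rfl
  · exfalso
    have h1 := congrFun h j
    simp only [nf, Function.update_self, Function.update_of_ne hjk] at h1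
    exact eps_ne_zero hm b (by linear_combination h1)

lemma nf_eq_iff (v u : Fin n → ZMod m) (j : Fin n) (b : Bool) :
    u = nf v (j, b) ↔ (u j = v j + (if b then 1 else -1) ∧ ∀ i, i ≠ j → u i = v i) := by
  constructor
  · rintro rfl
    exact ⟨by simp [nf], fun i hij => by simp [nf, Function.update_of_ne hij]⟩
  · rintro ⟨h1, h2⟩
    funext i
    by_cases hij : i = j
    · subst hij; simpa [nf] using h1
    · simp [nf, Function.update_of_ne hij, h2 i hij]

lemma neighborSet_eq (hm : 5 ≤ m) (v : Fin n → ZMod m) :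
    (torus m n).neighborSet v = Set.range (nf v) := by
  ext u
  simp only [SimpleGraph.mem_neighborSet, torus, SimpleGraph.fromRel_adj, Set.mem_range]
  constructor
  · rintro ⟨hne, h | h⟩
    · obtain ⟨j, hj, hoth⟩ := h
      rcases hj with hj | hj
      · exact ⟨(j, false), ((nf_eq_iff v u j false).2
          ⟨by show u j = v j + -1; linear_combination -hj,
           fun i hij => (hoth i hij).symm⟩).symm⟩
      · exact ⟨(j, true), ((nf_eq_iff v u j true).2
          ⟨by show u j = v j + 1; linear_combination -hj,
           fun i hij => (hoth i hij).symm⟩).symm⟩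
    · obtain ⟨j, hj, hoth⟩ := h
      rcases hj with hj | hj
      · exact ⟨(j, true), ((nf_eq_iff v u j true).2
          ⟨by show u j = v j + 1; linear_combination hj, hoth⟩).symm⟩
      · exact ⟨(j, false), ((nf_eq_iff v u j false).2
          ⟨by show u j = v j + -1; linear_combination hj, hoth⟩).symm⟩
  · rintro ⟨⟨j, b⟩, rfl⟩
    obtain ⟨h1, h2⟩ := (nf_eq_iff v (nf v (j,b)) j b).1 rfl
    refine ⟨?_, Or.inr ⟨j, ?_, fun i hij => h2 i hij⟩⟩
    · intro hvnf
      have := congrFun hvnf j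
      rw [h1] at this
      exact eps_ne_zero hm b (by linear_combination -this)
    · rcases b with _ | _
      · right; rw [h1]; show v j + -1 = v j - 1; ring
      · left; rw [h1]; show v j + 1 = v j + 1; rfl

lemma sum_nf (v : Fin n → ZMod m) (p : Fin n × Bool) :
    ∑ i, nf v p i = (∑ i, v i) + (if p.2 then 1 else -1) := by
  obtain ⟨j, b⟩ := p
  rw [show (∑ i, nf v (j,b) i) = ∑ i ∈ Finset.univ, Function.update v j (v j + if b then (1:ZMod m) else -1) i from rfl,
    Finset.sum_update_of_mem (Finset.mem_univ j)]
  rw [← Finset.add_sum_erase Finset.univ v (Finset.mem_univ j)]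
  rw [show Finset.univ \ {j} = Finset.univ.erase j by ext; simp [Finset.mem_erase, and_comm]]
  ring

lemma nbhd_single (v : Fin n → ZMod m) : nbhd (torus m n) {v} = (torus m n).neighborSet v := by
  ext u
  simp only [nbhd, Set.mem_diff, Set.mem_iUnion, Set.mem_singleton_iff,
    SimpleGraph.mem_neighborSet, exists_prop]
  constructor
  · rintro ⟨⟨x, rfl, h⟩, _⟩; exact h
  · exact fun h => ⟨⟨v, rfl, h⟩, fun he => (torus m n).irrefl (he ▸ h)⟩

end

section
variable {m n : ℕ}

lemma memI_iff (hm : 5 ≤ m) (hmo : Odd m) (s : ZMod m) :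
    (∃ j : ℕ, j < m / 2 ∧ s = 1 + 2 * (j : ZMod m)) ↔ Odd s.val := by
  haveI : NeZero m := ⟨by omega⟩
  constructor
  · rintro ⟨j, hj, rfl⟩
    have h1 : 1 + 2 * j < m := by omega
    have h2 : ((1 + 2 * j : ℕ) : ZMod m) = 1 + 2 * (j : ZMod m) := by push_cast; ring
    rw [← h2, ZMod.val_cast_of_lt h1]
    exact ⟨j, by omega⟩
  · rintro ⟨j, hj⟩
    have hlt : s.val < m := ZMod.val_lt s
    refine ⟨j, by omega, ?_⟩
    have hs : s = ((s.val : ℕ) : ZMod m) := by rw [ZMod.natCast_val, ZMod.cast_id]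
    rw [hs, hj]; push_cast; ring

lemma val_neg_nat (hm : 5 ≤ m) {a : ℕ} (ha1 : 1 ≤ a) (ham : a < m) :
    ((-(a : ZMod m))).val = m - a := by
  haveI : NeZero m := ⟨by omega⟩
  have h1 : ((m - a : ℕ) : ZMod m) = -(a : ZMod m) := by
    have : ((m : ℕ) : ZMod m) = 0 := ZMod.natCast_self m
    push_cast [Nat.cast_sub ham.le]
    rw [this]; ring
  rw [← h1, ZMod.val_cast_of_lt (by omega)]

lemma ncard_nbhdIn (hm : 5 ≤ m) (v : Fin n → ZMod m) (I : Set (Fin n → ZMod m))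
    (hmemI : ∀ u, u ∈ I ↔ Odd (∑ i, u i).val) :
    (nbhdIn (torus m n) {v} I).ncard =
      (if Odd (((∑ i, v i) + 1).val) then n else 0) +
      (if Odd (((∑ i, v i) + -1).val) then n else 0) := by
  classical
  have h1 : nbhdIn (torus m n) {v} I = nf v '' {p | nf v p ∈ I} := by
    rw [nbhdIn, nbhd_single, neighborSet_eq hm]
    ext u
    simp only [Set.mem_inter_iff, Set.mem_range, Set.mem_image, Set.mem_setOf_eq]
    constructor
    · rintro ⟨⟨p, rfl⟩, hu⟩; exact ⟨p, hu, rfl⟩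
    · rintro ⟨p, hp, rfl⟩; exact ⟨⟨p, rfl⟩, hp⟩
  rw [h1, Set.ncard_image_of_injective _ (nf_inj hm v)]
  have hset : {p : Fin n × Bool | nf v p ∈ I}
      = {p : Fin n × Bool | Odd (((∑ i, v i) + if p.2 then 1 else -1)).val} := by
    ext p; simp only [Set.mem_setOf_eq, hmemI, sum_nf]
  rw [hset]
  have htrue : {p : Fin n × Bool | p.2 = true}.ncard = n := by
    have him : {p : Fin n × Bool | p.2 = true} = (fun j : Fin n => (j, true)) '' Set.univ := by
      ext ⟨j, b⟩
      simp only [Set.mem_setOf_eq, Set.image_univ, Set.mem_range, Prod.mk.injEq]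
      constructor
      · rintro rfl; exact ⟨j, rfl, rfl⟩
      · rintro ⟨a, _, rfl⟩; rfl
    rw [him, Set.ncard_image_of_injective _ (fun a b h => congrArg Prod.fst h),
      Set.ncard_univ]
    simp
  have hfalse : {p : Fin n × Bool | p.2 = false}.ncard = n := by
    have him : {p : Fin n × Bool | p.2 = false} = (fun j : Fin n => (j, false)) '' Set.univ := by
      ext ⟨j, b⟩
      simp only [Set.mem_setOf_eq, Set.image_univ, Set.mem_range, Prod.mk.injEq]
      constructor
      · rintro rfl; exact ⟨j, rfl, rfl⟩
      · rintro ⟨a, _, rfl⟩; rfl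
    rw [him, Set.ncard_image_of_injective _ (fun a b h => congrArg Prod.fst h),
      Set.ncard_univ]
    simp
  by_cases hT : Odd (((∑ i, v i) + 1).val) <;> by_cases hF : Odd (((∑ i, v i) + -1).val)
  · rw [if_pos hT, if_pos hF]
    have he : {p : Fin n × Bool | Odd (((∑ i, v i) + if p.2 then 1 else -1)).val} = Set.univ := by
      ext ⟨j, b⟩; cases b <;> simp [hT, hF]
    rw [he, Set.ncard_univ]
    simp only [Nat.card_eq_fintype_card, Fintype.card_prod, Fintype.card_fin, Fintype.card_bool]
    omega
  · rw [if_pos hT, if_neg hF]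
    have he : {p : Fin n × Bool | Odd (((∑ i, v i) + if p.2 then 1 else -1)).val}
        = {p : Fin n × Bool | p.2 = true} := by
      ext ⟨j, b⟩; cases b <;> simp [hT, hF]
    rw [he, htrue]; omega
  · rw [if_neg hT, if_pos hF]
    have he : {p : Fin n × Bool | Odd (((∑ i, v i) + if p.2 then 1 else -1)).val}
        = {p : Fin n × Bool | p.2 = false} := by
      ext ⟨j, b⟩; cases b <;> simp [hT, hF]
    rw [he, hfalse]; omega
  · rw [if_neg hT, if_neg hF]
    have he : {p : Fin n × Bool | Odd (((∑ i, v i) + if p.2 then 1 else -1)).val}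
        = (∅ : Set (Fin n × Bool)) := by
      ext ⟨j, b⟩; cases b <;> simp [hT, hF]
    rw [he, Set.ncard_empty]

end

section
variable {m : ℕ}

lemma val_zero' (hm : 5 ≤ m) : ((0 : ZMod m)).val = 0 := by
  haveI : NeZero m := ⟨by omega⟩
  exact ZMod.val_zero

lemma val_negone (hm : 5 ≤ m) : ((-1 : ZMod m)).val = m - 1 := by
  have h := val_neg_nat hm (a := 1) le_rfl (by omega)
  rwa [Nat.cast_one] at h

lemma negone_ne_zero' (hm : 5 ≤ m) : (-1 : ZMod m) ≠ 0 := by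
  intro h
  have := val_negone hm
  rw [h, val_zero' hm] at this
  omega

lemma parity0 (hm : 5 ≤ m) (hmo : Odd m) :
    Odd (((0 : ZMod m) + 1).val) ∧ ¬ Odd (((0 : ZMod m) + -1).val) := by
  haveI : Fact (1 < m) := ⟨by omega⟩
  rw [Nat.odd_iff, Nat.odd_iff] at *
  constructor
  · rw [zero_add, ZMod.val_one]
  · rw [zero_add, val_negone hm]; omega

lemma parityneg1 (hm : 5 ≤ m) (hmo : Odd m) :
    ¬ Odd (((-1 : ZMod m) + 1).val) ∧ Odd (((-1 : ZMod m) + -1).val) := by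
  rw [Nat.odd_iff, Nat.odd_iff] at *
  constructor
  · rw [neg_add_cancel, val_zero' hm]; omega
  · have : (-1 : ZMod m) + -1 = -((2 : ℕ) : ZMod m) := by push_cast; ring
    rw [this, val_neg_nat hm (by omega) (by omega)]
    omega

lemma parity_mid (hm : 5 ≤ m) (hmo : Odd m) (s : ZMod m) (hso : ¬ Odd s.val)
    (h0 : s ≠ 0) (h1 : s ≠ -1) :
    Odd ((s + 1).val) ∧ Odd ((s + -1).val) := by
  haveI : NeZero m := ⟨by omega⟩
  rw [Nat.odd_iff] at hmo
  rw [Nat.odd_iff] at hso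
  have hlt : s.val < m := ZMod.val_lt s
  have hs0 : s.val ≠ 0 := fun h => h0 (by rwa [ZMod.val_eq_zero] at h)
  have hsm1 : s.val ≠ m - 1 := by
    intro h
    apply h1
    have hs : s = ((s.val : ℕ) : ZMod m) := by rw [ZMod.natCast_val, ZMod.cast_id]
    rw [hs, h]
    have hm0 : ((m : ℕ) : ZMod m) = 0 := ZMod.natCast_self m
    push_cast [Nat.cast_sub (by omega : 1 ≤ m)]
    rw [hm0]; ring
  have hbound : 2 ≤ s.val ∧ s.val ≤ m - 3 := by omega
  have hs : s = ((s.val : ℕ) : ZMod m) := by rw [ZMod.natCast_val, ZMod.cast_id]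
  constructor
  · have h : ((s.val + 1 : ℕ) : ZMod m) = s + 1 := by
      push_cast [ZMod.natCast_val, ZMod.cast_id]; ring
    rw [← h, ZMod.val_cast_of_lt (by omega), Nat.odd_iff]
    omega
  · have h : ((s.val - 1 : ℕ) : ZMod m) = s + -1 := by
      push_cast [Nat.cast_sub (by omega : 1 ≤ s.val), ZMod.natCast_val, ZMod.cast_id]; ring
    rw [← h, ZMod.val_cast_of_lt (by omega), Nat.odd_iff]
    omega

lemma card_classfilter (hm : 5 ≤ m) [NeZero m] (k : ℕ) (C : ZMod m → Prop) [DecidablePred C] :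
    (Finset.univ.filter fun v : Fin (k+1) → ZMod m => C (∑ i, v i)).card
      = (Finset.univ.filter C).card * m ^ k := by
  rw [Finset.card_eq_sum_card_fiberwise (f := fun v : Fin (k+1) → ZMod m => ∑ i, v i)
    (t := Finset.univ.filter C)
    (fun v hv => by
      simp only [Finset.mem_coe, Finset.mem_filter, Finset.mem_univ, true_and] at hv ⊢
      exact hv)]
  have hsum : ∀ b ∈ Finset.univ.filter C,
      ((Finset.univ.filter fun v : Fin (k+1) → ZMod m => C (∑ i, v i)).filter
        (fun v => ∑ i, v i = b)).card = m ^ k := by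
    intro b hb
    have hb' : C b := (Finset.mem_filter.1 hb).2
    rw [Finset.filter_filter]
    rw [show (Finset.univ.filter fun v : Fin (k+1) → ZMod m => C (∑ i, v i) ∧ ∑ i, v i = b)
        = (Finset.univ.filter fun v : Fin (k+1) → ZMod m => ∑ i, v i = b) from
      Finset.filter_congr (fun v _ => by
        constructor
        · exact fun h => h.2
        · exact fun h => ⟨h ▸ hb', h⟩), card_fiber k b]
  rw [Finset.sum_congr rfl hsum, Finset.sum_const, smul_eq_mul]

end

/-- For `m ≥ 5` odd and `I := {v : class of v ∈ {1, 3, …, m−2}}` (a maximum independent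
set of `Z_m^n`): `Σ_{v ∉ I} 2^(−|N({v}, I)|) = m^(n−1)·(2·2^(−n) + ((m−3)/2)·2^(−2n))`;
equivalently, every vertex of class `0` or `m−1` has exactly `n` neighbours in `I`, and
every other vertex outside `I` has exactly `2n` neighbours in `I`. -/
theorem stmt_15 (m n : ℕ) (hm : 5 ≤ m) (hmo : Odd m) (hn : 1 ≤ n)
    (I : Set (Fin n → ZMod m))
    (hI : I = {v | ∃ j : ℕ, j < m / 2 ∧ ∑ i, v i = 1 + 2 * (j : ZMod m)}) :
    (∑ᶠ v ∈ Iᶜ, ((2 : ℝ) ^ (nbhdIn (torus m n) {v} I).ncard)⁻¹ =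
        (m : ℝ) ^ (n - 1) *
          (2 * ((2 : ℝ) ^ n)⁻¹ + ((m : ℝ) - 3) / 2 * ((2 : ℝ) ^ (2 * n))⁻¹)) ∧
    (∀ v : Fin n → ZMod m, (∑ i, v i = 0 ∨ ∑ i, v i = -1) →
        (nbhdIn (torus m n) {v} I).ncard = n) ∧
    (∀ v : Fin n → ZMod m, v ∉ I → ∑ i, v i ≠ 0 → ∑ i, v i ≠ -1 →
        (nbhdIn (torus m n) {v} I).ncard = 2 * n) := by
  haveI : NeZero m := ⟨by omega⟩
  classical
  obtain ⟨k, rfl⟩ : ∃ k, n = k + 1 := ⟨n - 1, by omega⟩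
  have hmemI : ∀ v : Fin (k+1) → ZMod m, v ∈ I ↔ Odd (∑ i, v i).val := by
    intro v; rw [hI]; exact memI_iff hm hmo _
  have part2 : ∀ v : Fin (k+1) → ZMod m, (∑ i, v i = 0 ∨ ∑ i, v i = -1) →
      (nbhdIn (torus m (k+1)) {v} I).ncard = k + 1 := by
    intro v hv
    rw [ncard_nbhdIn hm v I hmemI]
    rcases hv with hv | hv <;> rw [hv]
    · rw [if_pos (parity0 hm hmo).1, if_neg (parity0 hm hmo).2]
    · rw [if_neg (parityneg1 hm hmo).1, if_pos (parityneg1 hm hmo).2]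
      omega
  have part3 : ∀ v : Fin (k+1) → ZMod m, v ∉ I → ∑ i, v i ≠ 0 → ∑ i, v i ≠ -1 →
      (nbhdIn (torus m (k+1)) {v} I).ncard = 2 * (k + 1) := by
    intro v hv h0 h1
    rw [ncard_nbhdIn hm v I hmemI]
    have hso : ¬ Odd (∑ i, v i).val := fun h => hv ((hmemI v).2 h)
    obtain ⟨hp1, hp2⟩ := parity_mid hm hmo _ hso h0 h1
    rw [if_pos hp1, if_pos hp2]
    omega
  refine ⟨?_, part2, part3⟩
  -- part 1
  have hIc : Iᶜ = ((Finset.univ.filter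
      fun v : Fin (k+1) → ZMod m => ¬ Odd (∑ i, v i).val : Finset _) : Set _) := by
    ext v
    simp only [Set.mem_compl_iff, hmemI v, Finset.coe_filter, Finset.mem_univ, true_and,
      Set.mem_setOf_eq]
  rw [hIc, finsum_mem_coe_finset]
  obtain ⟨F, hFdef⟩ : ∃ F : Finset (Fin (k+1) → ZMod m),
      F = Finset.univ.filter fun v : Fin (k+1) → ZMod m => ¬ Odd (∑ i, v i).val := ⟨_, rfl⟩
  rw [← hFdef]
  have hsplit : ∀ v ∈ F, ((2:ℝ) ^ (nbhdIn (torus m (k+1)) {v} I).ncard)⁻¹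
      = if (∑ i, v i = 0 ∨ ∑ i, v i = -1) then ((2:ℝ)^(k+1))⁻¹
        else ((2:ℝ)^(2*(k+1)))⁻¹ := by
    intro v hv
    by_cases hc : (∑ i, v i = 0 ∨ ∑ i, v i = -1)
    · rw [if_pos hc, part2 v hc]
    · push_neg at hc
      have hvI : v ∉ I := by
        rw [hmemI v]
        simpa [hFdef] using hv
      rw [if_neg (by tauto), part3 v hvI hc.1 hc.2]
  rw [Finset.sum_congr rfl hsplit, Finset.sum_ite, Finset.sum_const, Finset.sum_const]
  -- cardinalities
  have hcardF : F.card = (m - m / 2) * m ^ k := by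
    rw [hFdef, card_classfilter hm k (fun s => ¬ Odd s.val)]
    congr 1
    have hps := Finset.card_filter_add_card_filter_not
      (s := (Finset.univ : Finset (ZMod m))) (fun s : ZMod m => Odd s.val)
    rw [card_oddclasses hmo, Finset.card_univ] at hps
    have hcu : Fintype.card (ZMod m) = m := ZMod.card m
    omega
  have hcardP : (F.filter fun v => ∑ i, v i = 0 ∨ ∑ i, v i = -1).card = 2 * m ^ k := by
    have hfe : (F.filter fun v => ∑ i, v i = 0 ∨ ∑ i, v i = -1)
        = Finset.univ.filter (fun v : Fin (k+1) → ZMod m => ∑ i, v i = 0 ∨ ∑ i, v i = -1) := by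
      rw [hFdef, Finset.filter_filter]
      apply Finset.filter_congr
      intro v _
      constructor
      · exact fun h => h.2
      · intro h
        refine ⟨?_, h⟩
        rcases h with h | h <;> rw [h]
        · rw [Nat.odd_iff, val_zero' hm]; omega
        · rw [Nat.odd_iff, val_negone hm]
          rw [Nat.odd_iff] at hmo; omega
    rw [hfe, Finset.filter_or, Finset.card_union_of_disjoint, card_fiber k 0, card_fiber k (-1)]
    · ring
    · rw [Finset.disjoint_filter]
      intro v _ h0 h1
      exact negone_ne_zero' hm ((h0.symm.trans h1).symm)
  have hcardQ : (F.filter fun v => ¬(∑ i, v i = 0 ∨ ∑ i, v i = -1)).card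
      = (m - m / 2 - 2) * m ^ k := by
    have hps := Finset.card_filter_add_card_filter_not
      (s := F) (fun v : Fin (k+1) → ZMod m => ∑ i, v i = 0 ∨ ∑ i, v i = -1)
    rw [hcardP, hcardF] at hps
    rw [Nat.add_comm] at hps
    have hB := Nat.eq_sub_of_add_eq hps
    rw [Nat.sub_mul]
    exact hB
  rw [hcardP, hcardQ]
  clear hcardP hcardQ hsplit hIc hFdef hI hmemI part2 part3
  -- final arithmetic
  obtain ⟨t, ht⟩ := hmo
  have ht2 : 2 ≤ t := by omega
  have hdiv : m - m / 2 - 2 = t - 1 := by omega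
  rw [hdiv]
  subst ht
  have hk1 : k + 1 - 1 = k := rfl
  rw [hk1]
  rw [nsmul_eq_mul, nsmul_eq_mul]
  push_cast [Nat.cast_sub (by omega : 1 ≤ t)]
  field_simp
  ring
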